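/- Let a, b, x be d×d complex matrices with b Hermitian positive definite, and suppose bx + xb = a. Then ‖x‖ ≤ √(d/2) · ‖b⁻¹‖ · ‖a‖, where ‖·‖ denotes the Frobenius norm ‖x‖ = √(tr(x x*)). -/

import Mathlib

open Matrix
open scoped ComplexOrder

/-- The Frobenius norm of a complex matrix: `‖x‖ = √(tr (x x*))`. -/
noncomputable def frobNorm {d : ℕ} (x : Matrix (Fin d) (Fin d) ℂ) : ℝ :=
  Real.sqrt ((x * xᴴ).trace.re)

attribute [local instance] Matrix.frobeniusSeminormedAddCommGroup

namespace FrobAux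

lemma trace_mul_conjT {d : ℕ} (p q : Matrix (Fin d) (Fin d) ℂ) :
    (p * qᴴ).trace = ∑ i, ∑ j, p i j * (starRingEnd ℂ) (q i j) := by
  simp [Matrix.trace, Matrix.mul_apply, Matrix.conjTranspose_apply, Matrix.diag]

lemma trace_re_eq {d : ℕ} (p : Matrix (Fin d) (Fin d) ℂ) :
    (p * pᴴ).trace.re = ∑ i, ∑ j, ‖p i j‖ ^ 2 := by
  rw [trace_mul_conjT]
  simp [Complex.mul_conj, Complex.sq_norm, Complex.normSq_apply]

lemma trace_re_nonneg {d : ℕ} (p : Matrix (Fin d) (Fin d) ℂ) :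
    0 ≤ (p * pᴴ).trace.re := by
  rw [trace_re_eq]; positivity

lemma frobNorm_nonneg {d : ℕ} (p : Matrix (Fin d) (Fin d) ℂ) : 0 ≤ frobNorm p :=
  Real.sqrt_nonneg _

lemma frobNorm_sq {d : ℕ} (p : Matrix (Fin d) (Fin d) ℂ) :
    frobNorm p ^ 2 = (p * pᴴ).trace.re :=
  Real.sq_sqrt (trace_re_nonneg p)

lemma frobNorm_eq_norm {d : ℕ} (p : Matrix (Fin d) (Fin d) ℂ) :
    frobNorm p = ‖p‖ := by
  rw [frobNorm, trace_re_eq, Matrix.frobenius_norm_def, Real.sqrt_eq_rpow]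
  norm_num [Real.rpow_natCast]

lemma frobNorm_mul_le {d : ℕ} (p q : Matrix (Fin d) (Fin d) ℂ) :
    frobNorm (p * q) ≤ frobNorm p * frobNorm q := by
  simp only [frobNorm_eq_norm]
  exact Matrix.frobenius_norm_mul p q

/-- Cauchy–Schwarz for the trace form. -/
lemma abs_trace_le {d : ℕ} (p q : Matrix (Fin d) (Fin d) ℂ) :
    ‖(p * qᴴ).trace‖ ≤ frobNorm p * frobNorm q := by
  rw [trace_mul_conjT]
  calc ‖∑ i, ∑ j, p i j * (starRingEnd ℂ) (q i j)‖
      ≤ ∑ i, ∑ j, ‖p i j‖ * ‖q i j‖ := by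
        refine (norm_sum_le _ _).trans (Finset.sum_le_sum fun i _ => ?_)
        refine (norm_sum_le _ _).trans (Finset.sum_le_sum fun j _ => ?_)
        rw [norm_mul]
        simp
    _ = ∑ ij : Fin d × Fin d, ‖p ij.1 ij.2‖ * ‖q ij.1 ij.2‖ := by
        rw [← Finset.sum_product']
        rfl
    _ ≤ Real.sqrt (∑ ij : Fin d × Fin d, ‖p ij.1 ij.2‖ ^ 2) *
        Real.sqrt (∑ ij : Fin d × Fin d, ‖q ij.1 ij.2‖ ^ 2) :=
        Real.sum_mul_le_sqrt_mul_sqrt _ _ _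
    _ = frobNorm p * frobNorm q := by
        rw [frobNorm, frobNorm, trace_re_eq, trace_re_eq, ← Finset.sum_product',
          ← Finset.sum_product']
        rfl

end FrobAux

open FrobAux in
set_option maxHeartbeats 1000000 in
/-- If `b` is Hermitian positive definite and `b x + x b = a`, then
`‖x‖ ≤ √(d/2) ‖b⁻¹‖ ‖a‖` in the Frobenius norm. -/
theorem frobNorm_le_of_sylvester {d : ℕ} (a b x : Matrix (Fin d) (Fin d) ℂ)
    (hb : b.PosDef) (h : b * x + x * b = a) :
    frobNorm x ≤ Real.sqrt ((d : ℝ) / 2) * frobNorm b⁻¹ * frobNorm a := by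
  rcases Nat.eq_zero_or_pos d with hd | hd
  · subst hd
    have hx : frobNorm x = 0 := by
      simp [frobNorm, Matrix.trace]
    rw [hx]
    have h1 := frobNorm_nonneg (d := 0) b⁻¹
    have h2 := frobNorm_nonneg (d := 0) a
    have h3 : (0:ℝ) ≤ Real.sqrt ((0 : ℕ) / 2 : ℝ) := Real.sqrt_nonneg _
    positivity
  -- set up the square root of b
  · have hbps := hb.posSemidef
    obtain ⟨c, hch, hcc⟩ : ∃ c : Matrix (Fin d) (Fin d) ℂ, cᴴ = c ∧ c * c = b :=
      by
      letI : PartialOrder (Matrix (Fin d) (Fin d) ℂ) := Matrix.instPartialOrder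
      letI : StarOrderedRing (Matrix (Fin d) (Fin d) ℂ) := Matrix.instStarOrderedRing
      letI : NonnegSpectrumClass ℝ (Matrix (Fin d) (Fin d) ℂ) := Matrix.instNonnegSpectrumClass
      obtain ⟨X, hX, -, hXb⟩ := CFC.exists_sqrt_of_isSelfAdjoint_of_quasispectrumRestricts
        hb.isHermitian (QuasispectrumRestricts.nnreal_of_nonneg
          (Matrix.nonneg_iff_posSemidef.mpr hbps))
      exact ⟨X, hX, hXb⟩
    have hbdet : IsUnit b.det := hb.det_pos.ne'.isUnit
    have hcdet : IsUnit c.det := by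
      rw [isUnit_iff_ne_zero]
      intro h0
      apply hb.det_pos.ne'
      rw [← hcc, det_mul, h0, mul_zero]
    have hic : c⁻¹ * c = 1 := Matrix.nonsing_inv_mul c hcdet
    have hci : c * c⁻¹ = 1 := Matrix.mul_nonsing_inv c hcdet
    have hib : b⁻¹ * b = 1 := Matrix.nonsing_inv_mul b hbdet
    have hbi : b * b⁻¹ = 1 := Matrix.mul_nonsing_inv b hbdet
    have hcih : (c⁻¹)ᴴ = c⁻¹ := by rw [Matrix.conjTranspose_nonsing_inv, hch]
    have hbinv : b⁻¹ = c⁻¹ * c⁻¹ := by rw [← hcc, Matrix.mul_inv_rev]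
    have canc1 : ∀ y : Matrix (Fin d) (Fin d) ℂ, c * (c⁻¹ * y) = y := fun y => by
      rw [← Matrix.mul_assoc, hci, Matrix.one_mul]
    have canc2 : ∀ y : Matrix (Fin d) (Fin d) ℂ, c⁻¹ * (c * y) = y := fun y => by
      rw [← Matrix.mul_assoc, hic, Matrix.one_mul]
    -- the two conjugated matrices
    set u : Matrix (Fin d) (Fin d) ℂ := c⁻¹ * x * c with hu
    set v : Matrix (Fin d) (Fin d) ℂ := c * x * c⁻¹ with hv
    -- trace identities
    have key1 : ((b⁻¹ * (x * b)) * xᴴ).trace = (u * uᴴ).trace := by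
      have e1 : (b⁻¹ * (x * b)) * xᴴ = b⁻¹ * (x * b * xᴴ) := by
        simp [Matrix.mul_assoc]
      have e2 : u * uᴴ = c⁻¹ * (x * (c * (c * (xᴴ * c⁻¹)))) := by
        simp [hu, Matrix.conjTranspose_mul, hch, hcih, Matrix.mul_assoc]
      rw [e1, e2, Matrix.trace_mul_comm b⁻¹, Matrix.trace_mul_comm c⁻¹]
      congr 1
      rw [hbinv, ← hcc]
      simp [Matrix.mul_assoc]
    have key2 : ((b * (x * b⁻¹)) * xᴴ).trace = (v * vᴴ).trace := by
      have e1 : (b * (x * b⁻¹)) * xᴴ = b * (x * b⁻¹ * xᴴ) := by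
        simp [Matrix.mul_assoc]
      have e2 : v * vᴴ = c * (x * (c⁻¹ * (c⁻¹ * (xᴴ * c)))) := by
        simp [hv, Matrix.conjTranspose_mul, hch, hcih, Matrix.mul_assoc]
      rw [e1, e2, Matrix.trace_mul_comm b, Matrix.trace_mul_comm c]
      congr 1
      rw [hbinv, ← hcc]
      simp [Matrix.mul_assoc]
    have key3 : (x * xᴴ).trace = (u * vᴴ).trace := by
      have e2 : u * vᴴ = c⁻¹ * (x * (c * (c⁻¹ * (xᴴ * c)))) := by
        simp [hu, hv, Matrix.conjTranspose_mul, hch, hcih, Matrix.mul_assoc]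
      rw [e2, Matrix.trace_mul_comm c⁻¹]
      congr 1
      rw [canc1 (xᴴ * c), ← Matrix.mul_assoc x xᴴ c, Matrix.mul_assoc (x * xᴴ) c c⁻¹, hci,
        Matrix.mul_one]
    -- the two Sylvester decompositions
    have h1 : b⁻¹ * a = x + b⁻¹ * (x * b) := by
      rw [← h, Matrix.mul_add, ← Matrix.mul_assoc, ← Matrix.mul_assoc, hib, Matrix.one_mul,
        Matrix.mul_assoc]
    have h2 : a * b⁻¹ = x + b * (x * b⁻¹) := by
      rw [← h, Matrix.add_mul, Matrix.mul_assoc x b b⁻¹, hbi, Matrix.mul_one,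
        Matrix.mul_assoc b x b⁻¹, add_comm]
    set N := frobNorm x with hN
    set S := frobNorm u with hS
    set T := frobNorm v with hT
    set B := frobNorm b⁻¹ with hB
    set A := frobNorm a with hA
    have hN0 : 0 ≤ N := frobNorm_nonneg x
    have hS0 : 0 ≤ S := frobNorm_nonneg u
    have hT0 : 0 ≤ T := frobNorm_nonneg v
    have hB0 : 0 ≤ B := frobNorm_nonneg b⁻¹
    have hA0 : 0 ≤ A := frobNorm_nonneg a
    have i1 : N ^ 2 + S ^ 2 ≤ B * A * N := by
      have e : ((b⁻¹ * a) * xᴴ).trace = (x * xᴴ).trace + (u * uᴴ).trace := by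
        rw [h1, Matrix.add_mul, Matrix.trace_add, key1]
      calc N ^ 2 + S ^ 2 = ((b⁻¹ * a) * xᴴ).trace.re := by
            rw [hN, hS, frobNorm_sq, frobNorm_sq, e, Complex.add_re]
        _ ≤ ‖((b⁻¹ * a) * xᴴ).trace‖ := Complex.re_le_norm _
        _ ≤ frobNorm (b⁻¹ * a) * N := abs_trace_le _ _
        _ ≤ B * A * N := by
            have := frobNorm_mul_le b⁻¹ a
            nlinarith [frobNorm_nonneg (b⁻¹ * a)]
    have i2 : N ^ 2 + T ^ 2 ≤ B * A * N := by
      have e : ((a * b⁻¹) * xᴴ).trace = (x * xᴴ).trace + (v * vᴴ).trace := by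
        rw [h2, Matrix.add_mul, Matrix.trace_add, key2]
      calc N ^ 2 + T ^ 2 = ((a * b⁻¹) * xᴴ).trace.re := by
            rw [hN, hT, frobNorm_sq, frobNorm_sq, e, Complex.add_re]
        _ ≤ ‖((a * b⁻¹) * xᴴ).trace‖ := Complex.re_le_norm _
        _ ≤ frobNorm (a * b⁻¹) * N := abs_trace_le _ _
        _ ≤ B * A * N := by
            have := frobNorm_mul_le a b⁻¹
            nlinarith [frobNorm_nonneg (a * b⁻¹)]
    have i3 : N ^ 2 ≤ S * T := by
      calc N ^ 2 = (x * xᴴ).trace.re := by rw [hN, frobNorm_sq]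
        _ ≤ ‖(u * vᴴ).trace‖ := by
            rw [key3]; exact Complex.re_le_norm _
        _ ≤ S * T := abs_trace_le _ _
    have i4 : 2 * N ^ 2 ≤ B * A * N := by nlinarith
    have hhalf : (1 : ℝ) / 2 ≤ Real.sqrt ((d : ℝ) / 2) := by
      rw [show (1 : ℝ) / 2 = Real.sqrt ((1 : ℝ) / 4) by
        rw [show (1 : ℝ)/4 = (1/2)^2 by norm_num, Real.sqrt_sq (by norm_num)]]
      apply Real.sqrt_le_sqrt
      have : (1 : ℝ) ≤ (d : ℝ) := by exact_mod_cast hd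
      linarith
    rcases eq_or_lt_of_le hN0 with hN0' | hN0'
    · rw [← hN0']
      have h0 : (0:ℝ) ≤ Real.sqrt ((d : ℝ) / 2) := Real.sqrt_nonneg _
      positivity
    · have h2N : 2 * N ≤ B * A := by nlinarith
      calc N ≤ (1 / 2) * (B * A) := by linarith
        _ ≤ Real.sqrt ((d : ℝ) / 2) * B * A := by nlinarith
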